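/- Discrete Picone inequality: Let p > 1 and let a, b ≥ 0 and c, d > 0 be real numbers. Then |c - d|^(p-2)(c - d)(a^p / c^(p-1) - b^p / d^(p-1)) ≤ |a - b|^p. -/

import Mathlib

/-- Two-term Radon inequality via convexity of `x ↦ x ^ p`. -/
lemma radon2 (p x1 x2 y1 y2 : ℝ) (hp : 1 < p) (hx1 : 0 ≤ x1) (hx2 : 0 ≤ x2)
    (hy1 : 0 < y1) (hy2 : 0 < y2) :
    (x1 + x2) ^ p / (y1 + y2) ^ (p - 1) ≤ x1 ^ p / y1 ^ (p - 1) + x2 ^ p / y2 ^ (p - 1) := by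
  have hS : 0 < y1 + y2 := by linarith
  set S := y1 + y2 with hSdef
  have hSp : (0:ℝ) < S ^ (p - 1) := Real.rpow_pos_of_pos hS _
  set t : ℝ := y1 / S with htdef
  have ht0 : 0 < t := div_pos hy1 hS
  have ht1 : t < 1 := (div_lt_one hS).2 (by linarith)
  have h1t0 : 0 < 1 - t := by linarith
  have h1t : 1 - t = y2 / S := by field_simp [htdef]; rw [htdef, sub_mul, one_mul, div_mul_cancel₀ _ hS.ne']; linarith
  have key := (convexOn_rpow hp.le).2 (Set.mem_Ici.2 (div_nonneg hx1 ht0.le))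
      (Set.mem_Ici.2 (div_nonneg hx2 h1t0.le)) ht0.le h1t0.le (by ring)
  simp only [smul_eq_mul] at key
  rw [mul_div_cancel₀ _ ht0.ne', mul_div_cancel₀ _ h1t0.ne'] at key
  -- key : (x1 + x2) ^ p ≤ t * (x1 / t) ^ p + (1 - t) * (x2 / (1 - t)) ^ p
  have aux : ∀ x y : ℝ, 0 ≤ x → 0 < y →
      (y / S) * (x / (y / S)) ^ p = x ^ p / y ^ (p - 1) * S ^ (p - 1) := by
    intro x y hx hy
    have h1 : x / (y / S) = x * S / y := by field_simp
    have hyp : (0:ℝ) < y ^ p := Real.rpow_pos_of_pos hy _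
    have hSp' : (0:ℝ) < S ^ p := Real.rpow_pos_of_pos hS _
    rw [h1, Real.div_rpow (by positivity) hy.le, Real.mul_rpow hx hS.le,
      Real.rpow_sub hy, Real.rpow_sub hS, Real.rpow_one, Real.rpow_one]
    field_simp
  rw [htdef, h1t] at key
  rw [aux x1 y1 hx1 hy1, aux x2 y2 hx2 hy2] at key
  rw [div_le_iff₀ hSp]
  calc (x1 + x2) ^ p ≤ x1 ^ p / y1 ^ (p - 1) * S ^ (p - 1)
        + x2 ^ p / y2 ^ (p - 1) * S ^ (p - 1) := key
    _ = (x1 ^ p / y1 ^ (p - 1) + x2 ^ p / y2 ^ (p - 1)) * S ^ (p - 1) := by ring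

lemma key_lem (p a b c d : ℝ) (hp : 1 < p) (ha : 0 ≤ a) (hb : 0 ≤ b)
    (hc : 0 < c) (hd : 0 < d) (hcd : d < c) :
    (c - d) ^ (p - 1) * (a ^ p / c ^ (p - 1) - b ^ p / d ^ (p - 1)) ≤ |a - b| ^ p := by
  have hrhs : (0:ℝ) ≤ |a - b| ^ p := Real.rpow_nonneg (abs_nonneg _) _
  rcases le_or_gt a b with hab | hab
  · have h1 : a ^ p ≤ b ^ p := Real.rpow_le_rpow ha hab (by linarith)
    have h2 : d ^ (p - 1) ≤ c ^ (p - 1) := Real.rpow_le_rpow hd.le hcd.le (by linarith)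
    have h3 : a ^ p / c ^ (p - 1) ≤ b ^ p / d ^ (p - 1) :=
      div_le_div₀ (Real.rpow_nonneg hb _) h1 (Real.rpow_pos_of_pos hd _) h2
    have h4 : (0:ℝ) ≤ (c - d) ^ (p - 1) := Real.rpow_nonneg (by linarith) _
    nlinarith
  · have hr := radon2 p (a - b) b (c - d) d hp (by linarith) hb (by linarith) hd
    rw [show a - b + b = a by ring, show c - d + d = c by ring] at hr
    have hpos : (0:ℝ) < (c - d) ^ (p - 1) := Real.rpow_pos_of_pos (by linarith) _
    have : a ^ p / c ^ (p - 1) - b ^ p / d ^ (p - 1) ≤ (a - b) ^ p / (c - d) ^ (p - 1) := by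
      linarith
    calc (c - d) ^ (p - 1) * (a ^ p / c ^ (p - 1) - b ^ p / d ^ (p - 1))
        ≤ (c - d) ^ (p - 1) * ((a - b) ^ p / (c - d) ^ (p - 1)) := by
          exact mul_le_mul_of_nonneg_left this hpos.le
      _ = (a - b) ^ p := mul_div_cancel₀ _ hpos.ne'
      _ = |a - b| ^ p := by rw [abs_of_pos (by linarith)]

/-- discrete Picone inequality: for `p > 1`, `a, b ≥ 0`, `c, d > 0`,
`|c - d|^(p-2) (c - d) (a^p/c^(p-1) - b^p/d^(p-1)) ≤ |a - b|^p`
(real exponentiation is `Real.rpow`, so `|0|^(p-2)·0 = 0`). -/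
theorem stmt12 (p a b c d : ℝ) (hp : 1 < p) (ha : 0 ≤ a) (hb : 0 ≤ b)
    (hc : 0 < c) (hd : 0 < d) :
    |c - d| ^ (p - 2) * (c - d) * (a ^ p / c ^ (p - 1) - b ^ p / d ^ (p - 1)) ≤
      |a - b| ^ p := by
  have hrhs : (0:ℝ) ≤ |a - b| ^ p := Real.rpow_nonneg (abs_nonneg _) _
  rcases lt_trichotomy c d with h | h | h
  · -- c < d : swap roles
    have key := key_lem p b a d c hp hb ha hd hc h
    have habs : |c - d| = d - c := by rw [abs_of_neg (by linarith)]; ring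
    have hpow : |c - d| ^ (p - 2) * (c - d) = -((d - c) ^ (p - 1)) := by
      rw [habs, show p - 1 = (p - 2) + 1 by ring, Real.rpow_add (by linarith) ,
        Real.rpow_one]
      ring
    rw [hpow]
    rw [abs_sub_comm b a] at key
    nlinarith [key]
  · rw [h, sub_self]
    simpa using hrhs
  · have key := key_lem p a b c d hp ha hb hc hd h
    have habs : |c - d| = c - d := abs_of_pos (by linarith)
    have hpow : |c - d| ^ (p - 2) * (c - d) = (c - d) ^ (p - 1) := by
      rw [habs, show p - 1 = (p - 2) + 1 by ring, Real.rpow_add (by linarith),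
        Real.rpow_one]
    rw [hpow]; exact key
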